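/- Fundamental theorem of algebra for one-sided quaternion polynomials: let n ∈ ℕ and a₀, …, a_{n−1} ∈ ℍ, and suppose a_ℓ ≠ 0 for some ℓ ≥ 1. Then the polynomial p(x) = Σ_{ℓ=0}^{n−1} a_ℓ·x^ℓ has at least one root in ℍ, i.e., there exists x ∈ ℍ with Σ_{ℓ=0}^{n−1} a_ℓ·x^ℓ = 0. -/

import Mathlib

open Quaternion Finset Polynomial

namespace OQP

/-- Coefficient sequences for reducing powers modulo `t^2 - 2x t + N`. -/
def cd (x N : ℝ) : ℕ → ℝ × ℝ
  | 0 => (0, 1)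
  | (ℓ+1) => (2*x*(cd x N ℓ).1 + (cd x N ℓ).2, -N*(cd x N ℓ).1)

lemma pow_eq (x N : ℝ) (w : ℍ) (hw : w*w = (2*x) • w - N • (1:ℍ)) (ℓ : ℕ) :
    w^ℓ = (cd x N ℓ).1 • w + (cd x N ℓ).2 • (1:ℍ) := by
  induction ℓ with
  | zero => simp [cd]
  | succ ℓ ih =>
    rw [pow_succ, ih, add_mul, smul_mul_assoc, smul_mul_assoc, one_mul, hw]
    simp only [cd]
    module

lemma conj_pow' (h q : ℍ) (hh : h ≠ 0) (i : ℕ) :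
    (h * q * h⁻¹)^i = h * q^i * h⁻¹ := by
  have := GroupWithZero.conj_pow₀ (a := h⁻¹) (d := q) (s := i) (inv_ne_zero hh)
  simpa using this

lemma main (d : ℕ) (hd : 1 ≤ d) (a : ℕ → ℍ) (ha : a d ≠ 0) :
    ∃ x : ℍ, ∑ ℓ ∈ Finset.range (d+1), a ℓ * x ^ ℓ = 0 := by
  set R := Finset.range (d+1) with hR
  set r : ℕ → ℕ → ℝ := fun i j => (a i * star (a j)).re with hr
  -- the companion polynomial, over ℂ
  set g : ℂ[X] := ∑ i ∈ R, ∑ j ∈ R, C ((r i j : ℝ) : ℂ) * X^(i+j) with hg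
  have hco : g.coeff (2*d) = ((r d d : ℝ) : ℂ) := by
    have h1 : ∀ i ∈ R, i ≠ d → (∑ j ∈ R, C ((r i j : ℝ) : ℂ) * X^(i+j)).coeff (2*d) = 0 := by
      intro i hi hne
      rw [finset_sum_coeff]
      apply Finset.sum_eq_zero
      intro j hj
      have hi' : i < d+1 := Finset.mem_range.mp hi
      have hj' : j < d+1 := Finset.mem_range.mp hj
      have hne' : ¬ (2*d = i + j) := by omega
      simp [coeff_C_mul, coeff_X_pow, hne']
    have h2 : ∀ j ∈ R, j ≠ d → (C ((r d j : ℝ) : ℂ) * X^(d+j)).coeff (2*d) = 0 := by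
      intro j hj hne
      have hj' : j < d+1 := Finset.mem_range.mp hj
      have hne' : ¬ (2*d = d + j) := by omega
      simp [coeff_C_mul, coeff_X_pow, hne']
    rw [hg, finset_sum_coeff,
      Finset.sum_eq_single_of_mem d (Finset.self_mem_range_succ d) h1,
      finset_sum_coeff,
      Finset.sum_eq_single_of_mem d (Finset.self_mem_range_succ d) h2]
    simp [coeff_C_mul, coeff_X_pow, two_mul]
  have hrd : r d d ≠ 0 := by
    have : r d d = normSq (a d) := rfl
    rw [this]
    exact normSq_ne_zero.mpr ha
  have hdeg : 0 < g.degree := by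
    have h1 : ((2*d : ℕ) : WithBot ℕ) ≤ g.degree := by
      apply le_degree_of_ne_zero
      rw [hco]
      exact_mod_cast hrd
    refine lt_of_lt_of_le ?_ h1
    exact_mod_cast Nat.pos_of_ne_zero (by omega)
  obtain ⟨z, hz⟩ := Complex.exists_root hdeg
  have hz' : ∑ i ∈ R, ∑ j ∈ R, ((r i j : ℝ) : ℂ) * z^(i+j) = 0 := by
    have := hz
    simpa [hg, IsRoot, eval_finset_sum] using this
  set q : ℍ := ofComplex z with hqdef
  have hq0 : ∑ i ∈ R, ∑ j ∈ R, ((r i j : ℝ) : ℍ) * q^(i+j) = 0 := by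
    have := congrArg ofComplex hz'
    simpa [map_sum, map_mul, map_pow, hqdef, coe_ofComplex] using this
  set S : ℍ := ∑ i ∈ R, ∑ j ∈ R, (a i * star (a j)) * q^(i+j) with hSdef
  have hS : S = 0 := by
    have hsymm : S = ∑ i ∈ R, ∑ j ∈ R, (a j * star (a i)) * q^(i+j) := by
      rw [hSdef, Finset.sum_comm]
      exact Finset.sum_congr rfl fun i _ => Finset.sum_congr rfl fun j _ => by rw [add_comm]
    have h2 : S + S = 2 * ∑ i ∈ R, ∑ j ∈ R, ((r i j : ℝ) : ℍ) * q^(i+j) := by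
      nth_rewrite 2 [hsymm]
      nth_rewrite 1 [hSdef]
      rw [Finset.mul_sum, ← Finset.sum_add_distrib]
      refine Finset.sum_congr rfl fun i _ => ?_
      rw [Finset.mul_sum, ← Finset.sum_add_distrib]
      refine Finset.sum_congr rfl fun j _ => ?_
      have hstar : star (a i * star (a j)) = a j * star (a i) := by
        rw [star_mul, star_star]
      rw [← hstar, ← add_mul, self_add_star, mul_assoc]
    rw [hq0, mul_zero] at h2
    have h3 : (2:ℝ) • S = 0 := by rw [two_smul]; exact h2
    exact (smul_eq_zero.mp h3).resolve_left two_ne_zero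
  set h : ℍ := ∑ j ∈ R, star (a j) * q^j with hhdef
  by_cases hh : h ≠ 0
  · -- conjugate q by h to get a root
    refine ⟨h * q * h⁻¹, ?_⟩
    have key : (∑ i ∈ R, a i * (h*q*h⁻¹)^i) * h = S := by
      rw [Finset.sum_mul, hSdef]
      refine Finset.sum_congr rfl fun i _ => ?_
      rw [conj_pow' h q hh i]
      have lhs : a i * (h * q ^ i * h⁻¹) * h = a i * h * q ^ i := by
        rw [mul_assoc (a i) (h * q^i * h⁻¹) h, mul_assoc (h * q^i) h⁻¹ h,
          inv_mul_cancel₀ hh, mul_one, ← mul_assoc]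
      rw [lhs, hhdef, Finset.mul_sum, Finset.sum_mul]
      refine Finset.sum_congr rfl fun j _ => ?_
      simp only [add_comm i j, pow_add, mul_assoc]
    rw [hS] at key
    exact (mul_eq_zero.mp key).resolve_right hh
  · -- h = 0 : linear reduction on the conjugacy class of q
    push_neg at hh
    set x : ℝ := z.re with hx
    set N : ℝ := z.re^2 + z.im^2 with hN
    have hqq : q*q = (2*x) • q - N • (1:ℍ) := by
      ext <;>
        simp [hqdef, coe_ofComplex, Quaternion.re_mul, Quaternion.imI_mul, Quaternion.imJ_mul,
          Quaternion.imK_mul, hx, hN] <;> ring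
    set A : ℍ := ∑ ℓ ∈ R, (cd x N ℓ).1 • a ℓ with hA
    set B : ℍ := ∑ ℓ ∈ R, (cd x N ℓ).2 • a ℓ with hB
    have evalP : ∀ w : ℍ, w*w = (2*x) • w - N • (1:ℍ) →
        ∑ ℓ ∈ R, a ℓ * w^ℓ = A * w + B := by
      intro w hw
      rw [hA, hB, Finset.sum_mul, ← Finset.sum_add_distrib]
      refine Finset.sum_congr rfl fun ℓ _ => ?_
      rw [pow_eq x N w hw ℓ, mul_add, mul_smul_comm, mul_smul_comm, mul_one, smul_mul_assoc]
    have evalPs : ∀ w : ℍ, w*w = (2*x) • w - N • (1:ℍ) →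
        ∑ ℓ ∈ R, star (a ℓ) * w^ℓ = star A * w + star B := by
      intro w hw
      have hA' : star A = ∑ ℓ ∈ R, (cd x N ℓ).1 • star (a ℓ) := by
        rw [hA, star_sum]; exact Finset.sum_congr rfl fun ℓ _ => by rw [Quaternion.star_smul]
      have hB' : star B = ∑ ℓ ∈ R, (cd x N ℓ).2 • star (a ℓ) := by
        rw [hB, star_sum]; exact Finset.sum_congr rfl fun ℓ _ => by rw [Quaternion.star_smul]
      rw [hA', hB', Finset.sum_mul, ← Finset.sum_add_distrib]
      refine Finset.sum_congr rfl fun ℓ _ => ?_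
      rw [pow_eq x N w hw ℓ, mul_add, mul_smul_comm, mul_smul_comm, mul_one, smul_mul_assoc]
    have hAB : star A * q + star B = 0 := by
      rw [← evalPs q hqq]
      exact hh
    by_cases hAz : A = 0
    · -- then B = 0 and q is a root
      have hB0 : B = 0 := by
        have : star B = 0 := by simpa [hAz] using hAB
        simpa using congrArg star this
      exact ⟨q, by rw [evalP q hqq, hAz, hB0, zero_mul, zero_add]⟩
    · -- conjugate star q by A⁻¹
      set w : ℍ := A⁻¹ * star q * A with hw
      have hsq : star q * star q = (2*x) • star q - N • (1:ℍ) := by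
        have := congrArg star hqq
        simpa [star_mul, Quaternion.star_smul, star_sub, star_one] using this
      have hww : w*w = (2*x) • w - N • (1:ℍ) := by
        have h2 : w * w = A⁻¹ * (star q * star q) * A := by
          have := GroupWithZero.conj_pow₀ (s := 2) (a := A) (d := star q) hAz
          calc w * w = w ^ 2 := (sq w).symm
            _ = A⁻¹ * (star q)^2 * A := this
            _ = A⁻¹ * (star q * star q) * A := by rw [sq]
        rw [h2, hsq, mul_sub, sub_mul, mul_smul_comm, smul_mul_assoc, mul_smul_comm,
          smul_mul_assoc, mul_one, inv_mul_cancel₀ hAz, hw]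
      refine ⟨w, ?_⟩
      rw [evalP w hww, hw, ← mul_assoc A (A⁻¹ * star q) A, ← mul_assoc A A⁻¹ (star q),
        mul_inv_cancel₀ hAz, one_mul]
      have : star q * A + B = star (star A * q + star B) := by
        rw [star_add, star_mul, star_star, star_star]
      rw [this, hAB, star_zero]

end OQP

/-- Fundamental theorem of algebra for one-sided quaternion polynomials: if some
coefficient `a ℓ` with `ℓ ≥ 1` is non-zero, then `x ↦ Σ_{ℓ<n} a ℓ * x^ℓ` has a root. -/
theorem onesided_quaternion_poly_has_root (n : ℕ) (a : Fin n → ℍ[ℝ])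
    (h : ∃ ℓ : Fin n, 1 ≤ (ℓ : ℕ) ∧ a ℓ ≠ 0) :
    ∃ x : ℍ[ℝ], ∑ ℓ : Fin n, a ℓ * x ^ (ℓ : ℕ) = 0 := by
  classical
  obtain ⟨ℓ0, hℓ1, hℓ0⟩ := h
  set a' : ℕ → ℍ := fun k => if hk : k < n then a ⟨k, hk⟩ else 0 with ha'
  have hsum : ∀ x : ℍ, ∑ ℓ : Fin n, a ℓ * x ^ (ℓ : ℕ) = ∑ k ∈ Finset.range n, a' k * x ^ k := by
    intro x
    rw [← Fin.sum_univ_eq_sum_range (fun k => a' k * x ^ k) n]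
    refine Finset.sum_congr rfl fun ℓ _ => ?_
    simp [ha', ℓ.isLt]
  set s : Finset ℕ := (Finset.range n).filter (fun k => 1 ≤ k ∧ a' k ≠ 0) with hs
  have hℓ0s : (ℓ0 : ℕ) ∈ s := by
    rw [hs, Finset.mem_filter, Finset.mem_range]
    refine ⟨ℓ0.isLt, hℓ1, ?_⟩
    simp only [ha', dif_pos ℓ0.isLt]
    simpa using hℓ0
  have hne : s.Nonempty := ⟨ℓ0, hℓ0s⟩
  set d : ℕ := s.max' hne with hd
  have hds : d ∈ s := s.max'_mem hne
  rw [hs, Finset.mem_filter, Finset.mem_range] at hds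
  obtain ⟨hdn, hd1, hd0⟩ := hds
  have hvan : ∀ k, d < k → a' k = 0 := by
    intro k hk
    by_cases hkn : k < n
    · by_contra hne0
      have : k ∈ s := by
        rw [hs, Finset.mem_filter, Finset.mem_range]
        exact ⟨hkn, by omega, hne0⟩
      have := s.le_max' k this
      omega
    · simp only [ha', dif_neg hkn]
  obtain ⟨x, hx⟩ := OQP.main d hd1 a' hd0
  refine ⟨x, ?_⟩
  rw [hsum x, ← Finset.sum_subset (Finset.range_subset_range.mpr (by omega : d + 1 ≤ n))
    (fun k _ hk => ?_), hx]
  have : d < k := by simpa using hk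
  rw [hvan k this, zero_mul]
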